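/- For all integers i, j ≥ 1 and k ≥ 1, one has [w_{i,j,k}, x] = w_{i+1,j,k} · w_{i,j+1,k} · w_{i+1,j+1,k}. (The recursion for the elements w_{i,j,k} used in the proof of the proposition determining G^{2^k} ∩ Z.) -/

import Mathlib

namespace Paper

variable {G : Type*} [Group G]

/-- The paper's commutator `[a,b] = a⁻¹ b⁻¹ a b`. -/
def pc {G : Type*} [Group G] (a b : G) : G := a⁻¹ * b⁻¹ * a * b

/-- The left-normed iterated commutator `[a, x, (r)…, x]`. -/
def itc {G : Type*} [Group G] (x a : G) : ℕ → G
  | 0 => a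
  | r + 1 => pc (itc x a r) x

/-- `c_i`, where `c_1 = y` and `c_{i+1} = [c_i, x]`; equivalently `c_i = [y, x, (i-1)…, x]`. -/
def cc (x y : G) (i : ℕ) : G := itc x y (i - 1)

/-- `z_{m,n} = [c_m, c_n]`. -/
def zz (x y : G) (m n : ℕ) : G := pc (cc x y m) (cc x y n)

/-- `H = ⟨c_i : i ≥ 1⟩`. -/
def Hsub (x y : G) : Subgroup G :=
  Subgroup.closure {g | ∃ i, 1 ≤ i ∧ g = cc x y i}

/-- `Z = ⟨c_l², z_{m,n} : l, m, n ≥ 1⟩`. -/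
def Zsub (x y : G) : Subgroup G :=
  Subgroup.closure ({g | ∃ l, 1 ≤ l ∧ g = cc x y l ^ 2} ∪
    {g | ∃ m n, 1 ≤ m ∧ 1 ≤ n ∧ g = zz x y m n})

/-- `w_{i,j,k} = ∏_{t=1}^{2^k−1} [z_{i+t,j+t−1}, x, (2^k−1−t)…, x]`,
factors in order of increasing `t` (reindexed by `t ↦ t+1`). -/
def ww (x y : G) (i j k : ℕ) : G :=
  ((List.range (2 ^ k - 1)).map
    (fun t => itc x (zz x y (i + t + 1) (j + t)) (2 ^ k - 2 - t))).prod

/-- `L_k`, the normal closure of `{w_{i,j,k} : i,j ≥ 1} ∪ {z_{m,n} : m ≥ 2^k, n ≥ 1}`. -/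
def Lsub (x y : G) (k : ℕ) : Subgroup G :=
  Subgroup.normalClosure ({g | ∃ i j, 1 ≤ i ∧ 1 ≤ j ∧ g = ww x y i j k} ∪
    {g | ∃ m n, 2 ^ k ≤ m ∧ 1 ≤ n ∧ g = zz x y m n})

/-- `Q_k = ⟨c_l² : l ≥ 2^{k−1}⟩`. -/
def Qsub (x y : G) (k : ℕ) : Subgroup G :=
  Subgroup.closure {g | ∃ l, 2 ^ (k - 1) ≤ l ∧ g = cc x y l ^ 2}

/-- `d_k(h) = [h,x,(2^k−1)…,x]⁻¹ · x^{−2^k} · (xh)^{2^k}`. -/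
def dd (x y : G) (k : ℕ) (h : G) : G :=
  (itc x h (2 ^ k - 1))⁻¹ * (x ^ 2 ^ k)⁻¹ * (x * h) ^ 2 ^ k

/-- `Γ^{2^k} = ⟨g^{2^k} : g ∈ Γ⟩`. -/
def pow2Sub (G : Type*) [Group G] (k : ℕ) : Subgroup G :=
  Subgroup.closure {g | ∃ a : G, g = a ^ 2 ^ k}

/-- `ζ(h₁,h₂) = ∏_{ℓ=0}^{2^k−2} [h₁^x, x, (ℓ)…, x, h₂, x, (2^k−2−ℓ)…, x]`,
factors in order of increasing `ℓ`. -/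
def zeta (x : G) (k : ℕ) (h₁ h₂ : G) : G :=
  ((List.range (2 ^ k - 1)).map
    (fun l => itc x (pc (itc x (x⁻¹ * h₁ * x) l) h₂) (2 ^ k - 2 - l))).prod

set_option linter.unusedSectionVars false
set_option linter.unusedVariables false

section Helpers

variable (x y : G)

theorem pc_one : pc (1 : G) x = 1 := by simp [pc]

theorem pc_mul_left (u v w : G) : pc (u * v) w = v⁻¹ * pc u w * v * pc v w := by
  unfold pc; group

theorem pc_mul_right (u v w : G) : pc u (v * w) = pc u w * (w⁻¹ * pc u v * w) := by
  unfold pc; group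

theorem cc_mem {i : ℕ} (hi : 1 ≤ i) : cc x y i ∈ Hsub x y :=
  Subgroup.subset_closure ⟨i, hi, rfl⟩

theorem zz_mem {m n : ℕ} (hm : 1 ≤ m) (hn : 1 ≤ n) : zz x y m n ∈ Zsub x y :=
  Subgroup.subset_closure (Or.inr ⟨m, n, hm, hn, rfl⟩)

theorem cc_sq_mem {l : ℕ} (hl : 1 ≤ l) : cc x y l ^ 2 ∈ Zsub x y :=
  Subgroup.subset_closure (Or.inl ⟨l, hl, rfl⟩)

theorem cc_succ {m : ℕ} (hm : 1 ≤ m) : cc x y (m + 1) = pc (cc x y m) x := by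
  obtain ⟨n, rfl⟩ := Nat.exists_eq_add_of_le hm
  show itc x y (1 + n + 1 - 1) = pc (itc x y (1 + n - 1)) x
  have h1 : 1 + n + 1 - 1 = n + 1 := by omega
  have h2 : 1 + n - 1 = n := by omega
  rw [h1, h2, itc]

theorem conj_cc {m : ℕ} (hm : 1 ≤ m) :
    x⁻¹ * cc x y m * x = cc x y m * cc x y (m + 1) := by
  rw [cc_succ x y hm]; unfold pc; group

variable (hca : ∀ z ∈ Zsub x y, ∀ h ∈ Hsub x y, z * h = h * z)
variable (hz2 : ∀ z ∈ Zsub x y, z ^ 2 = 1)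

section

include hz2

theorem z_inv {z : G} (hz : z ∈ Zsub x y) : z⁻¹ = z := by
  have h := hz2 z hz
  rw [pow_two] at h
  calc z⁻¹ = z⁻¹ * (z * z) := by rw [h, mul_one]
    _ = z := by group

theorem z_comm {a b : G} (ha : a ∈ Zsub x y) (hb : b ∈ Zsub x y) : a * b = b * a := by
  calc a * b = (a * b)⁻¹ := (z_inv x y hz2 (mul_mem ha hb)).symm
    _ = b⁻¹ * a⁻¹ := by rw [mul_inv_rev]
    _ = b * a := by rw [z_inv x y hz2 ha, z_inv x y hz2 hb]

end

section

include hca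

theorem conj_z {z h : G} (hz : z ∈ Zsub x y) (hh : h ∈ Hsub x y) :
    h⁻¹ * z * h = z := by
  rw [mul_assoc, hca z hz h hh]; group

include hz2

theorem pc_zz_x {m n : ℕ} (hm : 1 ≤ m) (hn : 1 ≤ n) :
    pc (zz x y m n) x =
      zz x y (m + 1) n * (zz x y m (n + 1) * zz x y (m + 1) (n + 1)) := by
  set a := cc x y m with ha
  set b := cc x y n with hb
  set a' := cc x y (m + 1) with ha'
  set b' := cc x y (n + 1) with hb'
  have hc1 : x⁻¹ * a * x = a * a' := conj_cc x y hm
  have hc2 : x⁻¹ * b * x = b * b' := conj_cc x y hn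
  -- conjugate of zz by x
  have key : x⁻¹ * zz x y m n * x = pc (a * a') (b * b') := by
    have e : x⁻¹ * (a⁻¹ * b⁻¹ * a * b) * x =
        (x⁻¹ * a * x)⁻¹ * (x⁻¹ * b * x)⁻¹ * (x⁻¹ * a * x) * (x⁻¹ * b * x) := by group
    show x⁻¹ * (a⁻¹ * b⁻¹ * a * b) * x = pc (a * a') (b * b')
    rw [e, hc1, hc2]; rfl
  have hzmn : zz x y m n = pc a b := rfl
  have hzm1n : zz x y (m+1) n = pc a' b := rfl
  have hzmn1 : zz x y m (n+1) = pc a b' := rfl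
  have hzm1n1 : zz x y (m+1) (n+1) = pc a' b' := rfl
  have hmem_mn := zz_mem x y hm hn
  have hmem_m1n := zz_mem x y (by omega : 1 ≤ m+1) hn
  have hmem_mn1 := zz_mem x y hm (by omega : 1 ≤ n+1)
  have hmem_m1n1 := zz_mem x y (by omega : 1 ≤ m+1) (by omega : 1 ≤ n+1)
  have hbH' : b' ∈ Hsub x y := cc_mem x y (by omega)
  have haH' : a' ∈ Hsub x y := cc_mem x y (by omega)
  have step1 : pc a (b * b') = zz x y m (n+1) * zz x y m n := by
    rw [pc_mul_right, ← hzmn, ← hzmn1, conj_z x y hca hmem_mn hbH']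
  have step2 : pc a' (b * b') = zz x y (m+1) (n+1) * zz x y (m+1) n := by
    rw [pc_mul_right, ← hzm1n, ← hzm1n1, conj_z x y hca hmem_m1n hbH']
  have step3 : pc (a * a') (b * b') =
      zz x y m (n+1) * zz x y m n * (zz x y (m+1) (n+1) * zz x y (m+1) n) := by
    rw [pc_mul_left, step1, step2]
    have : a'⁻¹ * (zz x y m (n+1) * zz x y m n) * a' = zz x y m (n+1) * zz x y m n :=
      conj_z x y hca (mul_mem hmem_mn1 hmem_mn) haH'
    rw [mul_assoc (a'⁻¹) _ _ ] at this
    rw [mul_assoc a'⁻¹, this, mul_assoc]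
  have expand : pc (zz x y m n) x = (zz x y m n)⁻¹ * (x⁻¹ * zz x y m n * x) := by
    unfold pc; group
  rw [expand, key, step3, z_inv x y hz2 hmem_mn]
  -- now: zz m n * (zz m (n+1) * zz m n * (zz (m+1)(n+1) * zz (m+1) n)) = target
  have comm1 := z_comm x y hz2 hmem_mn hmem_mn1
  have sq : zz x y m n * zz x y m n = 1 := by
    have := hz2 _ hmem_mn; rwa [pow_two] at this
  calc zz x y m n * (zz x y m (n+1) * zz x y m n * (zz x y (m+1) (n+1) * zz x y (m+1) n))
      = zz x y m n * (zz x y m n * zz x y m (n+1) * (zz x y (m+1) (n+1) * zz x y (m+1) n)) := by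
        rw [comm1]
    _ = (zz x y m n * zz x y m n) * (zz x y m (n+1) * (zz x y (m+1) (n+1) * zz x y (m+1) n)) := by
        group
    _ = zz x y m (n+1) * (zz x y (m+1) (n+1) * zz x y (m+1) n) := by rw [sq, one_mul]
    _ = zz x y (m+1) n * (zz x y m (n+1) * zz x y (m+1) (n+1)) := by
        rw [z_comm x y hz2 hmem_m1n1 hmem_m1n, ← mul_assoc,
          z_comm x y hz2 hmem_mn1 hmem_m1n, mul_assoc]

theorem pc_x_mem {z : G} (hz : z ∈ Zsub x y) : pc z x ∈ Zsub x y := by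
  refine Subgroup.closure_induction (k := _) (p := fun g _ => pc g x ∈ Zsub x y)
    ?_ ?_ ?_ ?_ hz
  · rintro g (⟨l, hl, rfl⟩ | ⟨m, n, hm, hn, rfl⟩)
    · -- pc (c_l ^ 2) x = c_{l+1}^2 * zz (l+1) l
      show pc (cc x y l ^ 2) x ∈ Zsub x y
      have hpc : pc (cc x y l) x = cc x y (l + 1) := (cc_succ x y hl).symm
      have e1 : pc (cc x y l ^ 2) x =
          (cc x y l)⁻¹ * cc x y (l+1) * cc x y l * cc x y (l+1) := by
        rw [pow_two, pc_mul_left, hpc]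
      have e2 : (cc x y l)⁻¹ * cc x y (l+1) * cc x y l * cc x y (l+1) =
          cc x y (l+1) * (zz x y (l+1) l * cc x y (l+1)) := by
        show _ = cc x y (l+1) * (pc (cc x y (l+1)) (cc x y l) * cc x y (l+1))
        unfold pc; group
      have e3 : zz x y (l+1) l * cc x y (l+1) = cc x y (l+1) * zz x y (l+1) l :=
        hca _ (zz_mem x y (by omega) hl) _ (cc_mem x y (by omega))
      have e4 : pc (cc x y l ^ 2) x = cc x y (l+1) ^ 2 * zz x y (l+1) l := by
        rw [e1, e2, e3, pow_two]; group
      rw [e4]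
      exact mul_mem (cc_sq_mem x y (by omega)) (zz_mem x y (by omega) hl)
    · rw [pc_zz_x x y hca hz2 hm hn]
      exact mul_mem (zz_mem x y (by omega) hn)
        (mul_mem (zz_mem x y hm (by omega)) (zz_mem x y (by omega) (by omega)))
  · show pc (1:G) x ∈ Zsub x y
    rw [pc_one]; exact one_mem _
  · intro u v hu hv hpu hpv
    show pc (u * v) x ∈ Zsub x y
    rw [pc_mul_left]
    have hcm : v⁻¹ * pc u x * v = pc u x := by
      rw [mul_assoc, z_comm x y hz2 hpu hv]; group
    rw [hcm]
    exact mul_mem hpu hpv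
  · intro u hu hpu
    show pc u⁻¹ x ∈ Zsub x y
    rw [z_inv x y hz2 hu]; exact hpu

theorem pc_mul_x {u v : G} (hu : u ∈ Zsub x y) (hv : v ∈ Zsub x y) :
    pc (u * v) x = pc u x * pc v x := by
  rw [pc_mul_left]
  have hcm : v⁻¹ * pc u x * v = pc u x := by
    rw [mul_assoc, z_comm x y hz2 (pc_x_mem x y hca hz2 hu) hv]; group
  rw [hcm]

theorem itc_mem {z : G} (hz : z ∈ Zsub x y) (r : ℕ) : itc x z r ∈ Zsub x y := by
  induction r with
  | zero => exact hz
  | succ r ih => exact pc_x_mem x y hca hz2 ih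

theorem itc_mul {u v : G} (hu : u ∈ Zsub x y) (hv : v ∈ Zsub x y) (r : ℕ) :
    itc x (u * v) r = itc x u r * itc x v r := by
  induction r with
  | zero => rfl
  | succ r ih =>
    show pc (itc x (u*v) r) x = pc (itc x u r) x * pc (itc x v r) x
    rw [ih, pc_mul_x x y hca hz2 (itc_mem x y hca hz2 hu r) (itc_mem x y hca hz2 hv r)]

theorem prod_mem_Z {L : List G} (hL : ∀ a ∈ L, a ∈ Zsub x y) : L.prod ∈ Zsub x y := by
  induction L with
  | nil => exact one_mem _
  | cons a L ih =>
    rw [List.prod_cons]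
    exact mul_mem (hL a List.mem_cons_self) (ih fun b hb => hL b (List.mem_cons_of_mem a hb))

theorem pc_prod {L : List G} (hL : ∀ a ∈ L, a ∈ Zsub x y) :
    pc L.prod x = (L.map (fun a => pc a x)).prod := by
  induction L with
  | nil => simp [pc_one]
  | cons a L ih =>
    rw [List.prod_cons, List.map_cons, List.prod_cons,
      pc_mul_x x y hca hz2 (hL a List.mem_cons_self)
        (prod_mem_Z x y hca hz2 (fun b hb => hL b (List.mem_cons_of_mem a hb))),
      ih fun b hb => hL b (List.mem_cons_of_mem a hb)]

theorem range_prod_mul (N : ℕ) (f g : ℕ → G) (hf : ∀ t, f t ∈ Zsub x y)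
    (hg : ∀ t, g t ∈ Zsub x y) :
    ((List.range N).map (fun t => f t * g t)).prod =
      ((List.range N).map f).prod * ((List.range N).map g).prod := by
  induction N with
  | zero => simp
  | succ n ih =>
    rw [List.range_succ]
    simp only [List.map_append, List.prod_append, List.map_cons, List.map_nil,
      List.prod_cons, List.prod_nil, mul_one]
    rw [ih]
    have hPg : ((List.range n).map g).prod ∈ Zsub x y := by
      refine prod_mem_Z x y hca hz2 fun a ha => ?_
      obtain ⟨t, _, rfl⟩ := List.mem_map.mp ha
      exact hg t
    have hc : ((List.range n).map g).prod * f n = f n * ((List.range n).map g).prod :=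
      z_comm x y hz2 hPg (hf n)
    calc ((List.range n).map f).prod * ((List.range n).map g).prod * (f n * g n)
        = ((List.range n).map f).prod * (((List.range n).map g).prod * f n) * g n := by group
      _ = ((List.range n).map f).prod * (f n * ((List.range n).map g).prod) * g n := by rw [hc]
      _ = ((List.range n).map f).prod * f n * (((List.range n).map g).prod * g n) := by group

end

theorem itc_succ_left (a : G) (r : ℕ) : itc x a (r + 1) = itc x (pc a x) r := by
  induction r with
  | zero => rfl
  | succ r ih =>
    show pc (itc x a (r+1)) x = pc (itc x (pc a x) r) x
    rw [ih]

end Helpers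

theorem ww_recursion' (x y : G)
    (hca : ∀ z ∈ Zsub x y, ∀ h ∈ Hsub x y, z * h = h * z)
    (hz2 : ∀ z ∈ Zsub x y, z ^ 2 = 1)
    (i j k : ℕ) (hi : 1 ≤ i) (hj : 1 ≤ j) (hk : 1 ≤ k) :
    pc (ww x y i j k) x =
      ww x y (i + 1) j k * ww x y i (j + 1) k * ww x y (i + 1) (j + 1) k := by
  set N := 2 ^ k - 1 with hN
  set a : ℕ → G := fun t => itc x (zz x y (i + t + 2) (j + t)) (2 ^ k - 2 - t) with ha
  set b : ℕ → G := fun t => itc x (zz x y (i + t + 1) (j + t + 1)) (2 ^ k - 2 - t) with hb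
  set c : ℕ → G := fun t => itc x (zz x y (i + t + 2) (j + t + 1)) (2 ^ k - 2 - t) with hc
  have hma : ∀ t, a t ∈ Zsub x y := fun t =>
    itc_mem x y hca hz2 (zz_mem x y (by omega) (by omega)) _
  have hmb : ∀ t, b t ∈ Zsub x y := fun t =>
    itc_mem x y hca hz2 (zz_mem x y (by omega) (by omega)) _
  have hmc : ∀ t, c t ∈ Zsub x y := fun t =>
    itc_mem x y hca hz2 (zz_mem x y (by omega) (by omega)) _
  have hmbc : ∀ t, b t * c t ∈ Zsub x y := fun t => mul_mem (hmb t) (hmc t)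
  -- identify the three ww's
  have hwwA : ww x y (i + 1) j k = ((List.range N).map a).prod := by
    unfold ww
    congr 1
    refine List.map_congr_left fun t _ => ?_
    have : i + 1 + t + 1 = i + t + 2 := by omega
    rw [this]
  have hwwB : ww x y i (j + 1) k = ((List.range N).map b).prod := by
    unfold ww
    congr 1
    refine List.map_congr_left fun t _ => ?_
    have : j + 1 + t = j + t + 1 := by omega
    rw [this]
  have hwwC : ww x y (i + 1) (j + 1) k = ((List.range N).map c).prod := by
    unfold ww
    congr 1
    refine List.map_congr_left fun t _ => ?_
    have e1 : i + 1 + t + 1 = i + t + 2 := by omega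
    have e2 : j + 1 + t = j + t + 1 := by omega
    rw [e1, e2]
  -- LHS
  have hmemL : ∀ g ∈ (List.range N).map
      (fun t => itc x (zz x y (i + t + 1) (j + t)) (2 ^ k - 2 - t)), g ∈ Zsub x y := by
    intro g hg
    obtain ⟨t, _, rfl⟩ := List.mem_map.mp hg
    exact itc_mem x y hca hz2 (zz_mem x y (by omega) (by omega)) _
  have lhs1 : pc (ww x y i j k) x =
      ((List.range N).map (fun t => a t * (b t * c t))).prod := by
    unfold ww
    rw [pc_prod x y hca hz2 hmemL, List.map_map]
    congr 1
    refine List.map_congr_left fun t _ => ?_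
    show pc (itc x (zz x y (i + t + 1) (j + t)) (2 ^ k - 2 - t)) x = _
    have step : pc (itc x (zz x y (i + t + 1) (j + t)) (2 ^ k - 2 - t)) x =
        itc x (zz x y (i + t + 1) (j + t)) (2 ^ k - 2 - t + 1) := rfl
    rw [step, itc_succ_left, pc_zz_x x y hca hz2 (by omega) (by omega)]
    have e1 : i + t + 1 + 1 = i + t + 2 := by omega
    rw [e1, itc_mul x y hca hz2 (zz_mem x y (by omega) (by omega))
        (mul_mem (zz_mem x y (by omega) (by omega)) (zz_mem x y (by omega) (by omega))),
      itc_mul x y hca hz2 (zz_mem x y (by omega) (by omega)) (zz_mem x y (by omega) (by omega))]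
  rw [lhs1, range_prod_mul x y hca hz2 N a (fun t => b t * c t) hma hmbc,
    range_prod_mul x y hca hz2 N b c hmb hmc, hwwA, hwwB, hwwC, mul_assoc]


theorem ww_recursion (x y : G)
    (hca : ∀ z ∈ Zsub x y, ∀ h ∈ Hsub x y, z * h = h * z)
    (hz2 : ∀ z ∈ Zsub x y, z ^ 2 = 1)
    (i j k : ℕ) (hi : 1 ≤ i) (hj : 1 ≤ j) (hk : 1 ≤ k) :
    pc (ww x y i j k) x =
      ww x y (i + 1) j k * ww x y i (j + 1) k * ww x y (i + 1) (j + 1) k := by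
  exact ww_recursion' x y hca hz2 i j k hi hj hk

end Paper
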